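/- For a linear map A : E → F between finite-dimensional real inner product spaces, the operator norm of the induced map on exterior algebras equals the maximum over all linear subspaces V of E of the absolute value of the determinant (Jacobian) of A restricted to V, i.e. ‖A^∧‖ = max_{V ⊆ E} |det(A|_V)|, where det(A|_V) denotes the factor by which A scales volume on V. -/

import Mathlib

open ExteriorAlgebra

private lemma iMulti_cast {E : Type*} [AddCommGroup E] [Module ℝ E] {k k' : ℕ} (h : k = k')
    (v : Fin k' → E) : ιMulti ℝ k' v = ιMulti ℝ k (fun i => v (Fin.cast h i)) := by
  subst h; rfl

private lemma det_gram {n : ℕ} {μ : Fin n → ℝ} (f : Fin n → Fin n → ℝ)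
    (hf : ∀ i j, f i j = if i = j then μ i else 0)
    (S T : Finset (Fin n)) (h : S.card = T.card) :
    (Matrix.of fun i j : Fin S.card =>
      f (S.orderEmbOfFin rfl i) (T.orderEmbOfFin rfl (Fin.cast h j))).det =
      if S = T then ∏ i ∈ S, μ i else 0 := by
  rcases eq_or_ne S T with rfl | hST
  · rw [if_pos rfl]
    have hc : ∀ j : Fin S.card, Fin.cast h j = j := fun j => Fin.ext rfl
    have hm : (Matrix.of fun i j : Fin S.card =>
        f (S.orderEmbOfFin rfl i) (S.orderEmbOfFin rfl (Fin.cast h j))) =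
        Matrix.diagonal fun i => μ (S.orderEmbOfFin rfl i) := by
      ext i j
      rw [Matrix.of_apply, hc, hf]
      by_cases hij : i = j
      · subst hij; simp [Matrix.diagonal_apply_eq]
      · rw [if_neg (fun hh => hij ((S.orderEmbOfFin rfl).injective hh)),
          Matrix.diagonal_apply_ne _ hij]
    rw [hm, Matrix.det_diagonal]
    exact Finset.prod_bij (fun i _ => S.orderEmbOfFin rfl i)
      (fun i _ => S.orderEmbOfFin_mem rfl i)
      (fun i _ j _ hij => (S.orderEmbOfFin rfl).injective hij)
      (fun a ha => by
        have : a ∈ Set.range (S.orderEmbOfFin rfl) := by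
          rw [S.range_orderEmbOfFin rfl]; exact ha
        obtain ⟨i, hi⟩ := this
        exact ⟨i, Finset.mem_univ i, hi⟩)
      (fun i _ => rfl)
  · rw [if_neg hST]
    have hsub : ¬ S ⊆ T := fun hsub => hST (Finset.eq_of_subset_of_card_le hsub (le_of_eq h.symm))
    obtain ⟨a, haS, haT⟩ := Finset.not_subset.mp hsub
    obtain ⟨i, hi⟩ : ∃ i, S.orderEmbOfFin rfl i = a := by
      have : a ∈ Set.range (S.orderEmbOfFin rfl) := by
        rw [S.range_orderEmbOfFin rfl]; exact haS
      exact this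
    apply Matrix.det_eq_zero_of_row_eq_zero i
    intro j
    rw [Matrix.of_apply, hf, if_neg]
    intro hh
    exact haT (hi ▸ hh ▸ T.orderEmbOfFin_mem rfl (Fin.cast h j))

private lemma span_w {E : Type*} [NormedAddCommGroup E] [InnerProductSpace ℝ E]
    {n : ℕ} (e : OrthonormalBasis (Fin n) ℝ E) :
    Submodule.span ℝ (Set.range (fun S : Finset (Fin n) =>
      ιMulti ℝ S.card (fun i => e (S.orderEmbOfFin rfl i)))) = ⊤ := by
  set w : Finset (Fin n) → ExteriorAlgebra ℝ E :=
    fun S => ιMulti ℝ S.card (fun i => e (S.orderEmbOfFin rfl i)) with hw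
  refine le_antisymm le_top ?_
  rw [← ιMulti_span (R := ℝ) (M := E), Submodule.span_le]
  rintro _ ⟨⟨k, v⟩, rfl⟩
  show ιMulti ℝ k v ∈ Submodule.span ℝ (Set.range w)
  have hv : (ιMulti ℝ k) v = (ιMulti ℝ k) (fun i => ∑ j, (inner ℝ (e j) (v i) : ℝ) • e j) := by
    congr 1
    funext i
    exact (e.sum_repr' (v i)).symm
  rw [hv]
  rw [show ((ιMulti ℝ k (M := E)) fun i => ∑ j, (inner ℝ (e j) (v i) : ℝ) • e j) =
      ∑ d : Fin k → Fin n, (ιMulti ℝ k (M := E)) fun i => (inner ℝ (e (d i)) (v i) : ℝ) • e (d i)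
    from (ιMulti ℝ k (M := E)).toMultilinearMap.map_sum
      (g := fun i j => (inner ℝ (e j) (v i) : ℝ) • e j)]
  refine Submodule.sum_mem _ fun d _ => ?_
  rw [show ((ιMulti ℝ k (M := E)) fun i => (inner ℝ (e (d i)) (v i) : ℝ) • e (d i)) =
      (∏ i, (inner ℝ (e (d i)) (v i) : ℝ)) • (ιMulti ℝ k (M := E)) fun i => e (d i)
    from (ιMulti ℝ k (M := E)).toMultilinearMap.map_smul_univ _ _]
  refine Submodule.smul_mem _ _ ?_
  by_cases hd : Function.Injective d
  · set S : Finset (Fin n) := Finset.image d Finset.univ with hS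
    have hcard : S.card = k := by
      rw [hS, Finset.card_image_of_injective _ hd, Finset.card_univ, Fintype.card_fin]
    set s₀ : Fin k → Fin n := fun i => S.orderEmbOfFin rfl (Fin.cast hcard.symm i) with hs₀
    have hwS : w S = ιMulti ℝ k (fun i => e (s₀ i)) := iMulti_cast hcard.symm _
    have hs₀inj : Function.Injective s₀ :=
      (S.orderEmbOfFin rfl).injective.comp (Fin.cast_injective _)
    have hrange : Set.range d = Set.range s₀ := by
      ext x
      constructor
      · rintro ⟨i, rfl⟩
        have hx : d i ∈ S := Finset.mem_image.mpr ⟨i, Finset.mem_univ i, rfl⟩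
        have : d i ∈ Set.range (S.orderEmbOfFin rfl) := by
          rw [S.range_orderEmbOfFin rfl]; exact hx
        obtain ⟨j, hj⟩ := this
        exact ⟨Fin.cast hcard j, by simpa [hs₀] using hj⟩
      · rintro ⟨i, rfl⟩
        have hx : s₀ i ∈ S := S.orderEmbOfFin_mem rfl _
        obtain ⟨j, _, hj⟩ := Finset.mem_image.mp hx
        exact ⟨j, hj⟩
    set σ : Equiv.Perm (Fin k) := (Equiv.ofInjective d hd).trans
      ((Equiv.setCongr hrange).trans (Equiv.ofInjective s₀ hs₀inj).symm) with hσ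
    have hdσ : ∀ i, s₀ (σ i) = d i := by
      intro i
      have := Equiv.apply_ofInjective_symm hs₀inj
        ((Equiv.setCongr hrange) (Equiv.ofInjective d hd i))
      simpa [hσ] using this
    have hcomp : (fun i => e (d i)) = (fun i => e (s₀ i)) ∘ σ := by
      funext i
      simp [Function.comp, hdσ i]
    rw [hcomp, AlternatingMap.map_perm, hwS.symm]
    rcases Int.units_eq_one_or (Equiv.Perm.sign σ) with hs | hs
    · rw [hs, one_smul]
      exact Submodule.subset_span ⟨S, rfl⟩
    · rw [hs, Units.smul_def, Units.val_neg, Units.val_one, neg_zsmul, one_zsmul]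
      exact Submodule.neg_mem _ (Submodule.subset_span ⟨S, rfl⟩)
  · have : ¬ Function.Injective fun i => e (d i) := fun hinj =>
      hd (fun i j hij => hinj (by simp [hij]))
    rw [AlternatingMap.map_eq_zero_of_not_injective _ _ this]
    exact Submodule.zero_mem _



/-- The volume-scaling factor (absolute Jacobian determinant) of a linear map `A`
restricted to a subspace `V`, defined via the Gram determinant `√(det (A|_V)^* (A|_V))`.
For `V = ⊥` it equals `1`. -/
noncomputable def sdet {E F : Type*} [NormedAddCommGroup E] [InnerProductSpace ℝ E]
    [FiniteDimensional ℝ E] [NormedAddCommGroup F] [InnerProductSpace ℝ F]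
    [FiniteDimensional ℝ F] (A : E →ₗ[ℝ] F) (V : Submodule ℝ E) : ℝ :=
  Real.sqrt (LinearMap.det ((LinearMap.adjoint (A ∘ₗ V.subtype)) ∘ₗ (A ∘ₗ V.subtype)))

private lemma sdet_span_eq {E F : Type*} [NormedAddCommGroup E] [InnerProductSpace ℝ E]
    [FiniteDimensional ℝ E] [NormedAddCommGroup F] [InnerProductSpace ℝ F]
    [FiniteDimensional ℝ F] (A : E →ₗ[ℝ] F) {k : ℕ} {v : Fin k → E}
    (hv : Orthonormal ℝ v) :
    sdet A (Submodule.span ℝ (Set.range v)) =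
      Real.sqrt (Matrix.det (Matrix.of fun i j : Fin k => (inner ℝ (A (v i)) (A (v j)) : ℝ))) := by
  set V := Submodule.span ℝ (Set.range v) with hV
  have hli := hv.linearIndependent
  let b : Module.Basis (Fin k) ℝ V := Module.Basis.span hli
  have hb : ∀ i, (b i : E) = v i := fun i => congrArg Subtype.val (Module.Basis.span_apply hli i)
  have hbo : Orthonormal ℝ b := by
    rw [orthonormal_iff_ite] at hv ⊢
    intro i j
    rw [Submodule.coe_inner, hb, hb]
    exact hv i j
  let o : OrthonormalBasis (Fin k) ℝ V := b.toOrthonormalBasis hbo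
  have ho : ∀ i, o i = b i := fun i => congrFun (b.coe_toOrthonormalBasis hbo) i
  set B : V →ₗ[ℝ] F := A ∘ₗ V.subtype with hB
  unfold sdet
  congr 1
  rw [← LinearMap.det_toMatrix o.toBasis]
  congr 1
  ext i j
  rw [LinearMap.toMatrix_apply, o.coe_toBasis_repr_apply, o.repr_apply_apply]
  rw [LinearMap.comp_apply, LinearMap.adjoint_inner_right]
  have hBapp : ∀ l, B (o.toBasis l) = A (v l) := by
    intro l
    rw [o.coe_toBasis]
    show A ((o l : V) : E) = A (v l)
    rw [ho, hb]
  have hBapp' : B (o i) = A (v i) := by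
    have := hBapp i
    rwa [o.coe_toBasis] at this
  rw [hBapp, hBapp', Matrix.of_apply, real_inner_comm]

open ExteriorAlgebra in
/-- For a linear map `A : E → F` between finite-dimensional real inner product
spaces, the operator norm of the induced map `A^∧` on exterior algebras (w.r.t. the canonical
inner products on the exterior algebras, characterized by the Gram-determinant formula on
wedges of vectors together with orthogonality of distinct degrees) equals the maximum over all
subspaces `V ⊆ E` of `|det(A|_V)|`. The operator norm is expressed as the supremum of
`‖A^∧ x‖ = √(gF (A^∧ x) (A^∧ x))` over unit vectors `x`, and "equals the maximum" is expressed
via `IsGreatest`. -/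
theorem stmt0 {E F : Type*} [NormedAddCommGroup E] [InnerProductSpace ℝ E]
    [FiniteDimensional ℝ E] [NormedAddCommGroup F] [InnerProductSpace ℝ F]
    [FiniteDimensional ℝ F] (A : E →ₗ[ℝ] F)
    (gE : ExteriorAlgebra ℝ E →ₗ[ℝ] ExteriorAlgebra ℝ E →ₗ[ℝ] ℝ)
    (gF : ExteriorAlgebra ℝ F →ₗ[ℝ] ExteriorAlgebra ℝ F →ₗ[ℝ] ℝ)
    (hEsymm : ∀ x y, gE x y = gE y x) (hEpos : ∀ x, x ≠ 0 → 0 < gE x x)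
    (hFsymm : ∀ x y, gF x y = gF y x) (hFpos : ∀ x, x ≠ 0 → 0 < gF x x)
    (hEgram : ∀ (k : ℕ) (v w : Fin k → E),
      gE (ιMulti ℝ k v) (ιMulti ℝ k w) = Matrix.det (Matrix.of fun i j => (inner ℝ (v i) (w j) : ℝ)))
    (hEdeg : ∀ (k m : ℕ), k ≠ m → ∀ (v : Fin k → E) (w : Fin m → E),
      gE (ιMulti ℝ k v) (ιMulti ℝ m w) = 0)
    (hFgram : ∀ (k : ℕ) (v w : Fin k → F),
      gF (ιMulti ℝ k v) (ιMulti ℝ k w) = Matrix.det (Matrix.of fun i j => (inner ℝ (v i) (w j) : ℝ)))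
    (hFdeg : ∀ (k m : ℕ), k ≠ m → ∀ (v : Fin k → F) (w : Fin m → F),
      gF (ιMulti ℝ k v) (ιMulti ℝ m w) = 0) :
    IsGreatest {r : ℝ | ∃ V : Submodule ℝ E, r = sdet A V}
      (sSup {r : ℝ | ∃ x : ExteriorAlgebra ℝ E, gE x x = 1 ∧
        r = Real.sqrt (gF (ExteriorAlgebra.map A x) (ExteriorAlgebra.map A x))}) := by
  classical
  set n := Module.finrank ℝ E with hn
  have hsym : (LinearMap.adjoint A ∘ₗ A).IsSymmetric := by
    intro x y
    rw [LinearMap.comp_apply, LinearMap.comp_apply, LinearMap.adjoint_inner_left,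
      LinearMap.adjoint_inner_right]
  set e := hsym.eigenvectorBasis rfl with he
  set μ := hsym.eigenvalues rfl with hμdef
  have key : ∀ i j, (inner ℝ (A (e i)) (A (e j)) : ℝ) = if i = j then μ i else 0 := by
    intro i j
    have h1 : (LinearMap.adjoint A ∘ₗ A) (e i) = (μ i : ℝ) • e i :=
      hsym.apply_eigenvectorBasis rfl i
    have h2 : (inner ℝ (A (e i)) (A (e j)) : ℝ) = inner ℝ ((LinearMap.adjoint A ∘ₗ A) (e i)) (e j) := by
      rw [LinearMap.comp_apply, LinearMap.adjoint_inner_left]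
    rw [h2, h1, real_inner_smul_left, orthonormal_iff_ite.mp e.orthonormal i j]
    by_cases h : i = j <;> simp [h]
  have hμ0 : ∀ i, 0 ≤ μ i := by
    intro i
    have h := key i i
    rw [if_pos rfl] at h
    rw [← h]
    exact real_inner_self_nonneg
  set w : Finset (Fin n) → ExteriorAlgebra ℝ E :=
    fun S => ιMulti ℝ S.card (fun i => e (S.orderEmbOfFin rfl i)) with hwdef
  set Q : Finset (Fin n) → ℝ := fun S => ∏ i ∈ S, μ i with hQdef
  have hQ0 : ∀ S, 0 ≤ Q S := fun S => Finset.prod_nonneg fun i _ => hμ0 i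
  have hgEw : ∀ S T, gE (w S) (w T) = if S = T then 1 else 0 := by
    intro S T
    by_cases hc : S.card = T.card
    · rw [show w T = ιMulti ℝ S.card (fun i => e (T.orderEmbOfFin rfl (Fin.cast hc i))) from
        iMulti_cast hc _]
      rw [hwdef, hEgram]
      have := det_gram (μ := fun _ => (1:ℝ))
        (fun a b => (inner ℝ (e a) (e b) : ℝ))
        (fun a b => orthonormal_iff_ite.mp e.orthonormal a b) S T hc
      rw [this]
      simp
    · have hST : S ≠ T := fun h => hc (by rw [h])
      rw [if_neg hST, hwdef]
      exact hEdeg _ _ hc _ _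
  have hgFw : ∀ S T, gF (map A (w S)) (map A (w T)) = if S = T then Q S else 0 := by
    intro S T
    rw [hwdef]
    simp only [map_apply_ιMulti]
    by_cases hc : S.card = T.card
    · rw [show (ιMulti ℝ T.card) (⇑A ∘ fun i => e (T.orderEmbOfFin rfl i)) =
        ιMulti ℝ S.card (fun i => A (e (T.orderEmbOfFin rfl (Fin.cast hc i)))) from
        iMulti_cast hc _]
      rw [hFgram]
      have := det_gram (μ := μ)
        (fun a b => (inner ℝ (A (e a)) (A (e b)) : ℝ)) key S T hc
      rw [Function.comp_def]
      rw [this, hQdef]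
    · have hST : S ≠ T := fun h => hc (by rw [h])
      rw [if_neg hST]
      exact hFdeg _ _ hc _ _
  obtain ⟨S₀, hS₀⟩ := Finite.exists_max Q
  set G := Real.sqrt (Q S₀) with hG
  have hrep : ∀ x : ExteriorAlgebra ℝ E, ∃ c : Finset (Fin n) → ℝ, ∑ S, c S • w S = x := by
    intro x
    have hx : x ∈ Submodule.span ℝ (Set.range w) := by
      rw [hwdef, span_w e]
      exact Submodule.mem_top
    exact (Submodule.mem_span_range_iff_exists_fun ℝ).mp hx
  have hquadE : ∀ c : Finset (Fin n) → ℝ,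
      gE (∑ S, c S • w S) (∑ S, c S • w S) = ∑ S, (c S)^2 := by
    intro c
    simp only [map_sum, map_smul, LinearMap.sum_apply, LinearMap.smul_apply, smul_eq_mul, hgEw]
    simp only [mul_ite, mul_one, mul_zero, Finset.sum_ite_eq', Finset.mem_univ, if_true, sq]
  have hquadF : ∀ c : Finset (Fin n) → ℝ,
      gF (map A (∑ S, c S • w S)) (map A (∑ S, c S • w S)) = ∑ S, (c S)^2 * Q S := by
    intro c
    simp only [map_sum, map_smul, LinearMap.sum_apply, LinearMap.smul_apply, smul_eq_mul, hgFw]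
    simp only [mul_ite, mul_zero, Finset.sum_ite_eq', Finset.mem_univ, if_true]
    exact Finset.sum_congr rfl fun S _ => by ring
  have hGreat : IsGreatest {r : ℝ | ∃ x : ExteriorAlgebra ℝ E, gE x x = 1 ∧
      r = Real.sqrt (gF (ExteriorAlgebra.map A x) (ExteriorAlgebra.map A x))} G := by
    constructor
    · refine ⟨w S₀, ?_, ?_⟩
      · rw [hgEw S₀ S₀, if_pos rfl]
      · rw [hgFw S₀ S₀, if_pos rfl]
    · rintro r ⟨x, hx1, rfl⟩
      obtain ⟨c, hc⟩ := hrep x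
      rw [← hc] at hx1 ⊢
      rw [hquadF c]
      have hsum1 : ∑ S, (c S)^2 = 1 := by rw [← hquadE c]; exact hx1
      have hle : ∑ S, (c S)^2 * Q S ≤ Q S₀ := by
        calc ∑ S, (c S)^2 * Q S ≤ ∑ S, (c S)^2 * Q S₀ :=
              Finset.sum_le_sum fun S _ => mul_le_mul_of_nonneg_left (hS₀ S) (sq_nonneg _)
          _ = Q S₀ := by rw [← Finset.sum_mul, hsum1, one_mul]
      exact Real.sqrt_le_sqrt hle
  rw [hGreat.csSup_eq]
  constructor
  · -- G is attained as an sdet value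
    refine ⟨Submodule.span ℝ (Set.range (fun i : Fin S₀.card => e (S₀.orderEmbOfFin rfl i))), ?_⟩
    have hortho : Orthonormal ℝ (fun i : Fin S₀.card => e (S₀.orderEmbOfFin rfl i)) :=
      e.orthonormal.comp _ (S₀.orderEmbOfFin rfl).injective
    rw [sdet_span_eq A hortho, hG]
    congr 1
    have hdg := det_gram (μ := μ)
      (fun a b => (inner ℝ (A (e a)) (A (e b)) : ℝ)) key S₀ S₀ rfl
    rw [if_pos rfl] at hdg
    have hq : Q S₀ = ∏ i ∈ S₀, μ i := rfl
    rw [hq, ← hdg]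
    rfl
  · rintro r ⟨V, rfl⟩
    apply hGreat.2
    set m := Module.finrank ℝ V with hm
    set b := stdOrthonormalBasis ℝ V with hb
    set v : Fin m → E := fun i => ((b i : V) : E) with hv
    have hvo : Orthonormal ℝ v := by
      rw [orthonormal_iff_ite]
      intro i j
      rw [hv]
      rw [show (inner ℝ ((b i : V) : E) ((b j : V) : E) : ℝ) = inner ℝ (b i) (b j) from
        (Submodule.coe_inner V (b i) (b j)).symm]
      exact orthonormal_iff_ite.mp b.orthonormal i j
    have hspanv : Submodule.span ℝ (Set.range v) = V := by
      have h1 : Set.range v = (V.subtype) '' (Set.range b) := by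
        rw [← Set.range_comp]
        rfl
      rw [h1, Submodule.span_image]
      have h2 : Submodule.span ℝ (Set.range (b : Fin m → V)) = ⊤ := by
        rw [← b.coe_toBasis]
        exact b.toBasis.span_eq
      rw [h2, Submodule.map_top, Submodule.range_subtype]
    refine ⟨ιMulti ℝ m v, ?_, ?_⟩
    · rw [hEgram]
      have hone : (Matrix.of fun i j : Fin m => (inner ℝ (v i) (v j) : ℝ)) =
          (1 : Matrix (Fin m) (Fin m) ℝ) := by
        ext i j
        rw [Matrix.of_apply, orthonormal_iff_ite.mp hvo i j, Matrix.one_apply]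
      rw [hone, Matrix.det_one]
    · rw [← hspanv, sdet_span_eq A hvo, map_apply_ιMulti, hFgram]
      rfl
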